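/- arXiv:2201.00421 — 2 statements merged into one kernel-verified Lean document; each statement's English description precedes it below -/
import Mathlib

section
/- Let A = ⊛_ℕ B be the infinite Fermi C*-tensor product of a unital Z₂-graded C*-algebra B, with the action of the finite-permutation group ℙ. If a is an odd localized element of A (an element of the algebraic part with θ(a) = -a), then E_ω π_ω(a) E_ω = 0 for every symmetric state ω, where E_ω is the projection onto the U_ω(ℙ)-invariant vectors. -/
open scoped ComplexOrder

/-- A state on a unital complex *-algebra, written as a plain function. -/
def IsStateOn {R : Type*} [Ring R] [Algebra ℂ R] [StarRing R] (f : R → ℂ) : Prop :=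
  (∀ x y, f (x + y) = f x + f y) ∧ (∀ (c : ℂ) (x), f (c • x) = c * f x) ∧
    f 1 = 1 ∧ ∀ x, 0 ≤ f (star x * x)

/-- The group of finitary permutations of `ℕ` (those moving only finitely many points). -/
def finitaryPerms : Subgroup (Equiv.Perm ℕ) where
  carrier := {g | {k | g k ≠ k}.Finite}
  one_mem' := by
    show Set.Finite {k : ℕ | (1 : Equiv.Perm ℕ) k ≠ k}
    have h : {k : ℕ | (1 : Equiv.Perm ℕ) k ≠ k} = (∅ : Set ℕ) := by ext k; simp
    rw [h]; exact Set.finite_empty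
  mul_mem' := by
    intro g h hg hh
    show Set.Finite {k : ℕ | (g * h) k ≠ k}
    refine Set.Finite.subset (Set.Finite.union hh (hg.preimage h.injective.injOn)) ?_
    intro k hk
    simp only [Set.mem_setOf_eq, Equiv.Perm.mul_apply] at hk
    by_cases hhk : h k = k
    · right
      simp only [Set.mem_preimage, Set.mem_setOf_eq, hhk]
      rwa [hhk] at hk
    · left; exact hhk
  inv_mem' := by
    intro g hg
    show Set.Finite {k : ℕ | g⁻¹ k ≠ k}
    refine Set.Finite.subset (hg.image g) ?_
    intro k hk
    simp only [Set.mem_setOf_eq] at hk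
    exact ⟨g⁻¹ k, by show g (g⁻¹ k) ≠ g⁻¹ k; rw [show g (g⁻¹ k) = k from Equiv.apply_symm_apply g k]; exact Ne.symm hk,
      Equiv.apply_symm_apply g k⟩

private lemma half_cancel {A : Type*} [AddCommGroup A] [Module ℂ A] {x y : A}
    (h : x + x = y + y) : x = y := by
  have h2 : (2:ℂ) • x = (2:ℂ) • y := by rw [two_smul, two_smul]; exact h
  calc x = ((2:ℂ)⁻¹ * 2) • x := by norm_num
    _ = (2:ℂ)⁻¹ • ((2:ℂ) • x) := by rw [mul_smul]
    _ = (2:ℂ)⁻¹ • ((2:ℂ) • y) := by rw [h2]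
    _ = ((2:ℂ)⁻¹ * 2) • y := by rw [mul_smul]
    _ = y := by norm_num

private lemma graded_comm {A : Type*} [Ring A] [Algebra ℂ A] [StarRing A] [StarModule ℂ A]
    (θ : A ≃⋆ₐ[ℂ] A) (hθ : ∀ a, θ (θ a) = a)
    (S T : Set A)
    (hSθ : ∀ u ∈ S, θ u ∈ S) (hSstar : ∀ u ∈ S, star u ∈ S)
    (hTθ : ∀ v ∈ StarAlgebra.adjoin ℂ T, θ v ∈ StarAlgebra.adjoin ℂ T)
    (hbase : ∀ u ∈ S, ∀ v ∈ T,
      (u * v + u * v = (v + θ v) * u + (v - θ v) * θ u ∧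
       v * u + v * u = u * (v + θ v) + θ u * (v - θ v))) :
    ∀ u ∈ StarAlgebra.adjoin ℂ S, ∀ v ∈ StarAlgebra.adjoin ℂ T,
      (u * v + u * v = (v + θ v) * u + (v - θ v) * θ u ∧
       v * u + v * u = u * (v + θ v) + θ u * (v - θ v)) := by
  have hθalg : ∀ r : ℂ, θ (algebraMap ℂ A r) = algebraMap ℂ A r := fun r => by
    rw [Algebra.algebraMap_eq_smul_one, map_smul, map_one]
  have inner : ∀ v ∈ StarAlgebra.adjoin ℂ T, ∀ u ∈ S,
      (u * v + u * v = (v + θ v) * u + (v - θ v) * θ u ∧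
       v * u + v * u = u * (v + θ v) + θ u * (v - θ v)) := by
    intro v hv
    induction hv using StarAlgebra.adjoin_induction with
    | mem x hx => exact fun u hu => hbase u hu x hx
    | algebraMap r =>
      intro u hu
      constructor
      · rw [hθalg, ← Algebra.commutes r u]; noncomm_ring
      · rw [hθalg, Algebra.commutes r u]; noncomm_ring
    | add x y hx hy px py =>
      intro u hu
      obtain ⟨p1, p2⟩ := px u hu
      obtain ⟨q1, q2⟩ := py u hu
      constructor
      · rw [map_add]
        have h : u*(x+y) + u*(x+y) = (u*x + u*x) + (u*y + u*y) := by noncomm_ring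
        rw [h, p1, q1]; noncomm_ring
      · rw [map_add]
        have h : (x+y)*u + (x+y)*u = (x*u + x*u) + (y*u + y*u) := by noncomm_ring
        rw [h, p2, q2]; noncomm_ring
    | mul x y hx hy px py =>
      intro u hu
      have hθu := hSθ u hu
      have e1 := (px u hu).1
      have e2 := (px u hu).2
      have e2' := (px (θ u) hθu).2
      rw [hθ u] at e2'
      have f1 := (py u hu).1
      have f2 := (py u hu).2
      have f1' := (py (θ u) hθu).1
      rw [hθ u] at f1'
      constructor
      · apply half_cancel
        rw [map_mul]
        calc (u*(x*y) + u*(x*y)) + (u*(x*y) + u*(x*y))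
            = (u*x + u*x)*y + (u*x + u*x)*y := by noncomm_ring
          _ = ((x+θ x)*u + (x-θ x)*θ u)*y + (((x+θ x)*u + (x-θ x)*θ u))*y := by rw [e1]
          _ = (x+θ x)*(u*y + u*y) + (x-θ x)*(θ u*y + θ u*y) := by noncomm_ring
          _ = (x+θ x)*((y+θ y)*u + (y-θ y)*θ u)
              + (x-θ x)*((y+θ y)*θ u + (y-θ y)*u) := by rw [f1, f1']
          _ = ((x*y + θ x*θ y)*u + (x*y - θ x*θ y)*θ u)
              + ((x*y + θ x*θ y)*u + (x*y - θ x*θ y)*θ u) := by noncomm_ring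
      · apply half_cancel
        rw [map_mul]
        calc ((x*y)*u + (x*y)*u) + ((x*y)*u + (x*y)*u)
            = x*(y*u + y*u) + x*(y*u + y*u) := by noncomm_ring
          _ = x*(u*(y+θ y) + θ u*(y-θ y)) + x*(u*(y+θ y) + θ u*(y-θ y)) := by rw [f2]
          _ = (x*u + x*u)*(y+θ y) + (x*θ u + x*θ u)*(y-θ y) := by noncomm_ring
          _ = (u*(x+θ x) + θ u*(x-θ x))*(y+θ y)
              + (θ u*(x+θ x) + u*(x-θ x))*(y-θ y) := by rw [e2, e2']
          _ = (u*(x*y + θ x*θ y) + θ u*(x*y - θ x*θ y))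
              + (u*(x*y + θ x*θ y) + θ u*(x*y - θ x*θ y)) := by noncomm_ring
    | star x hx px =>
      intro u hu
      have hsu := hSstar u hu
      constructor
      · have h := congrArg star (px (star u) hsu).2
        simp only [star_add, star_sub, star_mul, star_star, map_star] at h ⊢
        exact h
      · have h := congrArg star (px (star u) hsu).1
        simp only [star_add, star_sub, star_mul, star_star, map_star] at h ⊢
        exact h
  intro u hu
  induction hu using StarAlgebra.adjoin_induction with
  | mem x hx => exact fun v hv => inner v hv x hx
  | algebraMap r =>
    intro v hv
    constructor
    · rw [hθalg, Algebra.commutes r v]; noncomm_ring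
    · rw [hθalg, ← Algebra.commutes r v]; noncomm_ring
  | add x y hx hy px py =>
    intro v hv
    obtain ⟨p1, p2⟩ := px v hv
    obtain ⟨q1, q2⟩ := py v hv
    constructor
    · rw [map_add]
      have h : (x+y)*v + (x+y)*v = (x*v + x*v) + (y*v + y*v) := by noncomm_ring
      rw [h, p1, q1]; noncomm_ring
    · rw [map_add]
      have h : v*(x+y) + v*(x+y) = (v*x + v*x) + (v*y + v*y) := by noncomm_ring
      rw [h, p2, q2]; noncomm_ring
  | mul x y hx hy px py =>
    intro v hv
    have hθv := hTθ v hv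
    have hw : v + θ v ∈ StarAlgebra.adjoin ℂ T := add_mem hv hθv
    have hw' : v - θ v ∈ StarAlgebra.adjoin ℂ T := sub_mem hv hθv
    have hθw : θ (v + θ v) = v + θ v := by rw [map_add, hθ, add_comm]
    have hθw' : θ (v - θ v) = -(v - θ v) := by rw [map_sub, hθ, neg_sub]
    have hxw : x*(v+θ v) = (v+θ v)*x := by
      have h := (px (v+θ v) hw).1
      rw [hθw, sub_self, zero_mul, add_zero, add_mul] at h
      exact half_cancel h
    have hxw' : x*(v-θ v) = (v-θ v)*θ x := by
      have h := (px (v-θ v) hw').1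
      rw [hθw'] at h
      rw [add_neg_cancel, zero_mul, zero_add, sub_neg_eq_add, add_mul] at h
      exact half_cancel h
    have hwy : (v+θ v)*y = y*(v+θ v) := by
      have h := (py (v+θ v) hw).2
      rw [hθw, sub_self, mul_zero, add_zero, mul_add] at h
      exact half_cancel h
    have hw'y : (v-θ v)*y = θ y*(v-θ v) := by
      have h := (py (v-θ v) hw').2
      rw [hθw'] at h
      rw [add_neg_cancel, mul_zero, zero_add, sub_neg_eq_add, mul_add] at h
      exact half_cancel h
    constructor
    · rw [map_mul]
      calc (x*y)*v + (x*y)*v = x*(y*v + y*v) := by noncomm_ring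
        _ = x*((v+θ v)*y + (v-θ v)*θ y) := by rw [(py v hv).1]
        _ = x*(v+θ v)*y + x*(v-θ v)*θ y := by noncomm_ring
        _ = (v+θ v)*x*y + (v-θ v)*θ x*θ y := by rw [hxw, hxw']
        _ = (v+θ v)*(x*y) + (v-θ v)*(θ x*θ y) := by noncomm_ring
    · rw [map_mul]
      calc v*(x*y) + v*(x*y) = (v*x + v*x)*y := by noncomm_ring
        _ = (x*(v+θ v) + θ x*(v-θ v))*y := by rw [(px v hv).2]
        _ = x*((v+θ v)*y) + θ x*((v-θ v)*y) := by noncomm_ring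
        _ = x*(y*(v+θ v)) + θ x*(θ y*(v-θ v)) := by rw [hwy, hw'y]
        _ = (x*y)*(v+θ v) + (θ x*θ y)*(v-θ v) := by noncomm_ring
  | star x hx px =>
    intro v hv
    have hsv : star v ∈ StarAlgebra.adjoin ℂ T := star_mem hv
    constructor
    · have h := congrArg star (px (star v) hsv).2
      simp only [star_add, star_sub, star_mul, star_star, map_star] at h ⊢
      exact h
    · have h := congrArg star (px (star v) hsv).1
      simp only [star_add, star_sub, star_mul, star_star, map_star] at h ⊢
      exact h

private lemma exists_blockPerm (M t : ℕ) (ht : t = 0 ∨ M ≤ t) :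
    ∃ g : Equiv.Perm ℕ, {k | g k ≠ k}.Finite ∧ ∀ k < M, g k = k + t := by
  have hinv : Function.Involutive
      (fun k => if k < M then k + t else if t ≤ k ∧ k < t + M then k - t else k) := by
    intro k; simp only; split_ifs <;> omega
  refine ⟨hinv.toPerm _, ?_, ?_⟩
  · apply Set.Finite.subset (Set.finite_Iio (t + M))
    intro k hk
    simp only [Set.mem_setOf_eq, Function.Involutive.coe_toPerm] at hk
    simp only [Set.mem_Iio]
    by_contra h
    push_neg at h
    apply hk
    split_ifs <;> omega
  · intro k hk
    simp only [Function.Involutive.coe_toPerm]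
    rw [if_pos hk]


set_option maxHeartbeats 1000000

/-- In the infinite Fermi C*-tensor product `A = ⊛_ℕ B`, if `a` is a
localized odd element (it lies in the algebraic part and `θ a = -a`), then for every
symmetric state `Ω`, the compression `E π(a) E` vanishes, where `E` is the projection
onto the `U(ℙ)`-invariant vectors of the covariant GNS representation. -/
theorem deFinetti_stmt13
(B : Type) [CStarAlgebra B] (β : B ≃⋆ₐ[ℂ] B) (hβ : ∀ b, β (β b) = b)
    (A : Type) [CStarAlgebra A]
    (θ : A ≃⋆ₐ[ℂ] A) (hθ : ∀ a, θ (θ a) = a)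
    (ι : ℕ → B →⋆ₐ[ℂ] A)
    (hθι : ∀ j b, θ (ι j b) = ι j (β b))
    (hdense :
      Dense ((StarAlgebra.adjoin ℂ (⋃ j, Set.range (ι j)) : StarSubalgebra ℂ A) : Set A))
    (hcomm : ∀ i j, i ≠ j → ∀ b b', (β b = b ∨ β b' = b') →
      ι i b * ι j b' = ι j b' * ι i b)
    (hanti : ∀ i j, i ≠ j → ∀ b b', β b = -b → β b' = -b' →
      ι i b * ι j b' = -(ι j b' * ι i b))
    (act : finitaryPerms → A ≃⋆ₐ[ℂ] A)
    (hactmul : ∀ g h x, act (g * h) x = act g (act h x))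
    (hactι : ∀ g j b, act g (ι j b) = ι ((g : Equiv.Perm ℕ) j) b)
    (Ω : A → ℂ) (hΩ : IsStateOn Ω)
    (hsym : ∀ g x, Ω (act g x) = Ω x)
(H : Type) [NormedAddCommGroup H] [InnerProductSpace ℂ H] [CompleteSpace H]
    (π : A →⋆ₐ[ℂ] (H →L[ℂ] H)) (ξ : H)
    (hcyc : Dense {x : H | ∃ a, π a ξ = x})
    (hrep : ∀ a, Ω a = (inner ℂ ξ (π a ξ) : ℂ))
    (U : finitaryPerms → (H →L[ℂ] H))
    (hUmul : ∀ g h, U (g * h) = U g * U h)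
    (hUunitary : ∀ g, U g ∈ unitary (H →L[ℂ] H))
    (hUξ : ∀ g, U g ξ = ξ)
    (hcov : ∀ g a, U g * π a = π (act g a) * U g)
(E : H →L[ℂ] H)
    (hEidem : E * E = E)
    (hEsa : ContinuousLinearMap.adjoint E = E)
    (hErange : ∀ x : H, (∀ g, U g x = x) ↔ E x = x)
    (hEinv : ∀ (x : H) (g), U g (E x) = E x) :
    ∀ a : A, a ∈ StarAlgebra.adjoin ℂ (⋃ j, Set.range (ι j)) → θ a = -a →
      E * π a * E = 0 := by
  intro a ha hodd
  classical
  set Sb : Set ℕ → Set A := fun s => ⋃ j ∈ s, Set.range (ι j) with hSb_def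
  have hSb_mem : ∀ (s : Set ℕ) (j : ℕ), j ∈ s → ∀ b, ι j b ∈ Sb s := by
    intro s j hj b
    simp only [hSb_def, Set.mem_iUnion]
    exact ⟨j, hj, b, rfl⟩
  have hSb_elim : ∀ (s : Set ℕ) (u : A), u ∈ Sb s → ∃ j ∈ s, ∃ b, ι j b = u := by
    intro s u hu
    simp only [hSb_def, Set.mem_iUnion, Set.mem_range] at hu
    obtain ⟨j, hj, b, rfl⟩ := hu
    exact ⟨j, hj, b, rfl⟩
  have hθalg : ∀ r : ℂ, θ (algebraMap ℂ A r) = algebraMap ℂ A r := fun r => by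
    rw [Algebra.algebraMap_eq_smul_one, map_smul, map_one]
  have hactalg : ∀ (g : finitaryPerms) (r : ℂ), act g (algebraMap ℂ A r) = algebraMap ℂ A r :=
    fun g r => by rw [Algebra.algebraMap_eq_smul_one, map_smul, map_one]
  have L1 : ∀ (s : Set ℕ), ∀ x ∈ StarAlgebra.adjoin ℂ (Sb s),
      θ x ∈ StarAlgebra.adjoin ℂ (Sb s) := by
    intro s x hx
    induction hx using StarAlgebra.adjoin_induction with
    | mem y hy =>
      obtain ⟨j, hj, b, rfl⟩ := hSb_elim s y hy
      rw [hθι]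
      exact StarAlgebra.subset_adjoin ℂ _ (hSb_mem s j hj (β b))
    | algebraMap r => rw [hθalg]; exact algebraMap_mem _ r
    | add x y hx hy px py => rw [map_add]; exact add_mem px py
    | mul x y hx hy px py => rw [map_mul]; exact mul_mem px py
    | star x hx px => rw [map_star]; exact star_mem px
  have L2 : ∀ (g : finitaryPerms) (s s' : Set ℕ), (∀ j ∈ s, (g : Equiv.Perm ℕ) j ∈ s') →
      ∀ x ∈ StarAlgebra.adjoin ℂ (Sb s), act g x ∈ StarAlgebra.adjoin ℂ (Sb s') := by
    intro g s s' hmap x hx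
    induction hx using StarAlgebra.adjoin_induction with
    | mem y hy =>
      obtain ⟨j, hj, b, rfl⟩ := hSb_elim s y hy
      rw [hactι]
      exact StarAlgebra.subset_adjoin ℂ _ (hSb_mem s' _ (hmap j hj) b)
    | algebraMap r => rw [hactalg]; exact algebraMap_mem _ r
    | add x y hx hy px py => rw [map_add]; exact add_mem px py
    | mul x y hx hy px py => rw [map_mul]; exact mul_mem px py
    | star x hx px => rw [map_star]; exact star_mem px
  have L3 : ∀ (g : finitaryPerms), ∀ x ∈ StarAlgebra.adjoin ℂ (⋃ j, Set.range (ι j)),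
      θ (act g x) = act g (θ x) := by
    intro g x hx
    induction hx using StarAlgebra.adjoin_induction with
    | mem y hy =>
      simp only [Set.mem_iUnion, Set.mem_range] at hy
      obtain ⟨j, b, rfl⟩ := hy
      rw [hactι, hθι, hθι, hactι]
    | algebraMap r => simp only [hactalg, hθalg]
    | add x y hx hy px py => simp only [map_add, px, py]
    | mul x y hx hy px py => simp only [map_mul, px, py]
    | star x hx px => simp only [map_star, px]
  have hmono : ∀ s s' : Set ℕ, s ⊆ s' →
      StarAlgebra.adjoin ℂ (Sb s) ≤ StarAlgebra.adjoin ℂ (Sb s') := by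
    intro s s' hss
    apply StarAlgebra.adjoin_le
    exact (Set.biUnion_subset_biUnion_left hss).trans (StarAlgebra.subset_adjoin ℂ _)
  have L4 : ∃ M, a ∈ StarAlgebra.adjoin ℂ (Sb (Set.Iio M)) := by
    clear hodd
    induction ha using StarAlgebra.adjoin_induction with
    | mem y hy =>
      simp only [Set.mem_iUnion, Set.mem_range] at hy
      obtain ⟨j, b, rfl⟩ := hy
      exact ⟨j+1, StarAlgebra.subset_adjoin ℂ _ (hSb_mem (Set.Iio (j+1)) j (Nat.lt_succ_self j) b)⟩
    | algebraMap r => exact ⟨0, algebraMap_mem _ r⟩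
    | add x y hx hy px py =>
      obtain ⟨M1, h1⟩ := px
      obtain ⟨M2, h2⟩ := py
      exact ⟨max M1 M2, add_mem (hmono _ _ (Set.Iio_subset_Iio (le_max_left _ _)) h1)
        (hmono _ _ (Set.Iio_subset_Iio (le_max_right _ _)) h2)⟩
    | mul x y hx hy px py =>
      obtain ⟨M1, h1⟩ := px
      obtain ⟨M2, h2⟩ := py
      exact ⟨max M1 M2, mul_mem (hmono _ _ (Set.Iio_subset_Iio (le_max_left _ _)) h1)
        (hmono _ _ (Set.Iio_subset_Iio (le_max_right _ _)) h2)⟩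
    | star x hx px =>
      obtain ⟨M1, h1⟩ := px
      exact ⟨M1, star_mem h1⟩
  obtain ⟨M, haM⟩ := L4
  -- generator-level graded commutation
  have Hbase : ∀ i j, i ≠ j → ∀ b b',
      (ι i b * ι j b' + ι i b * ι j b'
          = (ι j b' + θ (ι j b')) * ι i b + (ι j b' - θ (ι j b')) * θ (ι i b) ∧
       ι j b' * ι i b + ι j b' * ι i b
          = ι i b * (ι j b' + θ (ι j b')) + θ (ι i b) * (ι j b' - θ (ι j b'))) := by
    intro i j hij b b'
    set b0 := (2⁻¹:ℂ) • (b + β b) with hb0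
    set b1 := (2⁻¹:ℂ) • (b - β b) with hb1
    set c0 := (2⁻¹:ℂ) • (b' + β b') with hc0
    set c1 := (2⁻¹:ℂ) • (b' - β b') with hc1
    have hsum : ∀ z : B, (2⁻¹:ℂ) • (z + β z) + (2⁻¹:ℂ) • (z - β z) = z := by
      intro z
      rw [← smul_add]
      have h : (z + β z) + (z - β z) = z + z := by abel
      rw [h, ← two_smul ℂ z, smul_smul]
      norm_num
    have hβ0 : β b0 = b0 := by rw [hb0, map_smul, map_add, hβ, add_comm]
    have hβ1 : β b1 = -b1 := by rw [hb1, map_smul, map_sub, hβ, ← neg_sub b (β b), smul_neg]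
    have hγ0 : β c0 = c0 := by rw [hc0, map_smul, map_add, hβ, add_comm]
    have hγ1 : β c1 = -c1 := by rw [hc1, map_smul, map_sub, hβ, ← neg_sub b' (β b'), smul_neg]
    have hbb : b0 + b1 = b := hsum b
    have hbb' : c0 + c1 = b' := hsum b'
    have hβb : β b = b0 - b1 := by
      conv_lhs => rw [← hbb]
      rw [map_add, hβ0, hβ1, ← sub_eq_add_neg]
    have hβb' : β b' = c0 - c1 := by
      conv_lhs => rw [← hbb']
      rw [map_add, hγ0, hγ1, ← sub_eq_add_neg]
    have h00 : ι i b0 * ι j c0 = ι j c0 * ι i b0 := hcomm i j hij b0 c0 (Or.inl hβ0)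
    have h01 : ι i b0 * ι j c1 = ι j c1 * ι i b0 := hcomm i j hij b0 c1 (Or.inl hβ0)
    have h10 : ι i b1 * ι j c0 = ι j c0 * ι i b1 := hcomm i j hij b1 c0 (Or.inr hγ0)
    have h11 : ι i b1 * ι j c1 = -(ι j c1 * ι i b1) := hanti i j hij b1 c1 hβ1 hγ1
    have hu : ι i b = ι i b0 + ι i b1 := by rw [← hbb, map_add]
    have hv : ι j b' = ι j c0 + ι j c1 := by rw [← hbb', map_add]
    have hθu : θ (ι i b) = ι i b0 - ι i b1 := by rw [hθι, hβb, map_sub]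
    have hθv : θ (ι j b') = ι j c0 - ι j c1 := by rw [hθι, hβb', map_sub]
    have e : (ι i b0 + ι i b1) * (ι j c0 + ι j c1)
        = ι j c0 * ι i b0 + ι j c1 * ι i b0 + ι j c0 * ι i b1 - ι j c1 * ι i b1 := by
      calc (ι i b0 + ι i b1) * (ι j c0 + ι j c1)
          = ι i b0 * ι j c0 + ι i b0 * ι j c1 + ι i b1 * ι j c0 + ι i b1 * ι j c1 := by
            noncomm_ring
        _ = ι j c0 * ι i b0 + ι j c1 * ι i b0 + ι j c0 * ι i b1 + -(ι j c1 * ι i b1) := by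
            rw [h00, h01, h10, h11]
        _ = _ := by abel
    have h11' : ι j c1 * ι i b1 = -(ι i b1 * ι j c1) := by rw [h11, neg_neg]
    have e' : (ι j c0 + ι j c1) * (ι i b0 + ι i b1)
        = ι i b0 * ι j c0 + ι i b0 * ι j c1 + ι i b1 * ι j c0 - ι i b1 * ι j c1 := by
      calc (ι j c0 + ι j c1) * (ι i b0 + ι i b1)
          = ι j c0 * ι i b0 + ι j c0 * ι i b1 + ι j c1 * ι i b0 + ι j c1 * ι i b1 := by
            noncomm_ring
        _ = ι i b0 * ι j c0 + ι i b1 * ι j c0 + ι i b0 * ι j c1 + -(ι i b1 * ι j c1) := by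
            rw [← h00, ← h10, ← h01, h11']
        _ = _ := by abel
    constructor
    · rw [hθu, hθv, hu, hv, e]; noncomm_ring
    · rw [hθu, hθv, hu, hv, e']; noncomm_ring
  -- the permutations
  have hgpex : ∀ n : ℕ, ∃ g : finitaryPerms, ∀ k < M, (g : Equiv.Perm ℕ) k = k + n*M := by
    intro n
    have ht : n*M = 0 ∨ M ≤ n*M := by
      rcases Nat.eq_zero_or_pos n with h|h
      · left; simp [h]
      · right; exact Nat.le_mul_of_pos_left M h
    obtain ⟨g, hfin, happ⟩ := exists_blockPerm M (n*M) ht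
    exact ⟨⟨g, hfin⟩, happ⟩
  choose gp hgp using hgpex
  set blk : ℕ → Set ℕ := fun n => Set.Ico (n*M) (n*M+M) with hblk
  set aa : ℕ → A := fun n => act (gp n) a with haa
  have haan : ∀ n, aa n = act (gp n) a := fun n => rfl
  have hmemn : ∀ n, aa n ∈ StarAlgebra.adjoin ℂ (Sb (blk n)) := by
    intro n
    rw [haan]
    apply L2 (gp n) (Set.Iio M) (blk n) _ a haM
    intro j hj
    rw [hgp n j hj]
    simp only [hblk, Set.mem_Ico]
    refine ⟨Nat.le_add_left _ _, ?_⟩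
    rw [Nat.add_comm (n*M) M]
    exact Nat.add_lt_add_right hj _
  have hoddn : ∀ n, θ (aa n) = -(aa n) := by
    intro n
    rw [haan, L3 (gp n) a ha, hodd, map_neg]
  have hstar_mem : ∀ n, star (aa n) ∈ StarAlgebra.adjoin ℂ (Sb (blk n)) :=
    fun n => star_mem (hmemn n)
  have hstar_odd : ∀ n, θ (star (aa n)) = -(star (aa n)) := by
    intro n
    rw [map_star, hoddn, star_neg]
  have hdisj : ∀ m n : ℕ, m ≠ n → ∀ i ∈ blk m, ∀ j ∈ blk n, i ≠ j := by
    intro m n hmn i hi j hj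
    simp only [hblk, Set.mem_Ico] at hi hj
    rintro rfl
    rcases Nat.lt_or_ge m n with h|h
    · have hle : m*M + M ≤ n*M := by
        rw [← Nat.succ_mul]
        exact Nat.mul_le_mul_right M h
      exact absurd (lt_of_lt_of_le hi.2 (le_trans hle hj.1)) (lt_irrefl i)
    · have h' : n < m := lt_of_le_of_ne h (fun e => hmn e.symm)
      have hle : n*M + M ≤ m*M := by
        rw [← Nat.succ_mul]
        exact Nat.mul_le_mul_right M h'
      exact absurd (lt_of_lt_of_le hj.2 (le_trans hle hi.1)) (lt_irrefl i)
  have Hanti : ∀ m n : ℕ, m ≠ n → star (aa m) * aa n + aa n * star (aa m) = 0 := by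
    intro m n hmn
    have hSθ' : ∀ u ∈ Sb (blk m), θ u ∈ Sb (blk m) := by
      intro u hu
      obtain ⟨j, hj, b, rfl⟩ := hSb_elim _ u hu
      rw [hθι]
      exact hSb_mem _ j hj (β b)
    have hSstar' : ∀ u ∈ Sb (blk m), star u ∈ Sb (blk m) := by
      intro u hu
      obtain ⟨j, hj, b, rfl⟩ := hSb_elim _ u hu
      rw [← map_star]
      exact hSb_mem _ j hj (star b)
    have hbase' : ∀ u ∈ Sb (blk m), ∀ v ∈ Sb (blk n),
        (u * v + u * v = (v + θ v) * u + (v - θ v) * θ u ∧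
         v * u + v * u = u * (v + θ v) + θ u * (v - θ v)) := by
      intro u hu v hv
      obtain ⟨i, hi, b, rfl⟩ := hSb_elim _ u hu
      obtain ⟨j, hj, b', rfl⟩ := hSb_elim _ v hv
      exact Hbase i j (hdisj m n hmn i hi j hj) b b'
    have key := graded_comm θ hθ (Sb (blk m)) (Sb (blk n)) hSθ' hSstar' (L1 (blk n))
        hbase' (star (aa m)) (hstar_mem m) (aa n) (hmemn n)
    have k1 := key.1
    rw [hoddn n, hstar_odd m] at k1
    have k2 : star (aa m) * aa n + star (aa m) * aa n
        = -(aa n * star (aa m)) + -(aa n * star (aa m)) := by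
      rw [k1]; noncomm_ring
    have k3 := half_cancel k2
    rw [k3]
    exact neg_add_cancel _
  -- unitary facts
  have hU1 : U 1 = 1 := by
    have h := (Unitary.mem_iff.mp (hUunitary 1)).1
    have h2 : U 1 * U 1 = U 1 := by rw [← hUmul, mul_one]
    calc U 1 = 1 * U 1 := (one_mul _).symm
      _ = (star (U 1) * U 1) * U 1 := by rw [h]
      _ = star (U 1) * (U 1 * U 1) := by rw [mul_assoc]
      _ = star (U 1) * U 1 := by rw [h2]
      _ = 1 := h
  have hUinv' : ∀ g : finitaryPerms, U g * U g⁻¹ = 1 := fun g => by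
    rw [← hUmul, mul_inv_cancel, hU1]
  have hstarU : ∀ g : finitaryPerms, star (U g) = U g⁻¹ := fun g => by
    have h := (Unitary.mem_iff.mp (hUunitary g)).1
    calc star (U g) = star (U g) * (U g * U g⁻¹) := by rw [hUinv', mul_one]
      _ = (star (U g) * U g) * U g⁻¹ := by rw [mul_assoc]
      _ = U g⁻¹ := by rw [h, one_mul]
  have hUE : ∀ g : finitaryPerms, U g * E = E := by
    intro g
    ext x
    simp only [ContinuousLinearMap.mul_apply]
    exact hEinv x g
  have hEU : ∀ g : finitaryPerms, E * U g = E := by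
    intro g
    have h := congrArg star (hUE g⁻¹)
    rw [star_mul, hstarU, inv_inv] at h
    rw [ContinuousLinearMap.star_eq_adjoint, hEsa] at h
    exact h
  have hcomp : ∀ (g : finitaryPerms) (x : A), E * π (act g x) * E = E * π x * E := by
    intro g x
    have h1 : π (act g x) * E = U g * (π x * E) := by
      conv_lhs => rw [← hUE g]
      rw [← mul_assoc, ← hcov, mul_assoc]
    calc E * π (act g x) * E = E * (π (act g x) * E) := by rw [mul_assoc]
      _ = E * (U g * (π x * E)) := by rw [h1]
      _ = (E * U g) * (π x * E) := by rw [mul_assoc]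
      _ = E * (π x * E) := by rw [hEU]
      _ = E * π x * E := by rw [mul_assoc]
  -- norm facts about E
  have hstE : star E = E := by rw [ContinuousLinearMap.star_eq_adjoint, hEsa]
  have hEE : ‖E‖ * ‖E‖ = ‖E‖ := by
    calc ‖E‖ * ‖E‖ = ‖star E * E‖ := (CStarRing.norm_star_mul_self).symm
      _ = ‖E‖ := by rw [hstE, hEidem]
  have hE1 : ‖E‖ ≤ 1 := by nlinarith [norm_nonneg E]
  -- main quantitative estimate
  have hmain : ∀ N : ℕ, 1 ≤ N → ‖E * π a * E‖^2 ≤ 2*‖a‖^2 / N := by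
    intro N hN
    have hNC : (N:ℂ) ≠ 0 := Nat.cast_ne_zero.mpr (by omega)
    have hNR : (N:ℝ) ≠ 0 := Nat.cast_ne_zero.mpr (by omega)
    set s : H →L[ℂ] H := (N:ℂ)⁻¹ • ∑ n ∈ Finset.range N, π (aa n) with hs_def
    have hTa : ∀ n, E * π (aa n) * E = E * π a * E := by
      intro n
      rw [haan]
      exact hcomp (gp n) a
    have hEsE : E * s * E = E * π a * E := by
      rw [hs_def, mul_smul_comm, smul_mul_assoc]
      have h1 : E * (∑ n ∈ Finset.range N, π (aa n)) * E
          = ∑ n ∈ Finset.range N, E * π (aa n) * E := by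
        rw [Finset.mul_sum, Finset.sum_mul]
      rw [h1]
      have h2 : ∑ n ∈ Finset.range N, E * π (aa n) * E = N • (E * π a * E) := by
        rw [Finset.sum_congr rfl fun n _ => hTa n, Finset.sum_const, Finset.card_range]
      rw [h2, ← Nat.cast_smul_eq_nsmul ℂ, smul_smul, inv_mul_cancel₀ hNC, one_smul]
    set Dop : H →L[ℂ] H := star s * s + s * star s with hD_def
    have hstars : star s = (N:ℂ)⁻¹ • ∑ n ∈ Finset.range N, π (star (aa n)) := by
      rw [hs_def, star_smul, star_sum]
      have h1 : star ((N:ℂ)⁻¹) = (N:ℂ)⁻¹ := by simp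
      rw [h1]
      congr 1
      exact Finset.sum_congr rfl fun n _ => (map_star π (aa n)).symm
    have hDop : Dop = ((N:ℂ)⁻¹ * (N:ℂ)⁻¹) •
        ∑ m ∈ Finset.range N, π (star (aa m) * aa m + aa m * star (aa m)) := by
      have h1 : star s * s = ((N:ℂ)⁻¹*(N:ℂ)⁻¹) •
          ∑ m ∈ Finset.range N, ∑ n ∈ Finset.range N, π (star (aa m) * aa n) := by
        rw [hstars, hs_def, smul_mul_assoc, mul_smul_comm, smul_smul, Finset.sum_mul_sum]
        congr 1
        exact Finset.sum_congr rfl fun m _ =>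
          Finset.sum_congr rfl fun n _ => (map_mul π _ _).symm
      have h2 : s * star s = ((N:ℂ)⁻¹*(N:ℂ)⁻¹) •
          ∑ m ∈ Finset.range N, ∑ n ∈ Finset.range N, π (aa n * star (aa m)) := by
        rw [hs_def, hstars, smul_mul_assoc, mul_smul_comm, smul_smul, Finset.sum_mul_sum]
        rw [Finset.sum_comm]
        congr 1
        exact Finset.sum_congr rfl fun m _ =>
          Finset.sum_congr rfl fun n _ => (map_mul π _ _).symm
      rw [hD_def, h1, h2, ← smul_add, ← Finset.sum_add_distrib]
      congr 1
      refine Finset.sum_congr rfl fun m hm => ?_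
      rw [← Finset.sum_add_distrib]
      have h3 : ∀ n ∈ Finset.range N, π (star (aa m) * aa n) + π (aa n * star (aa m))
          = π (star (aa m) * aa n + aa n * star (aa m)) :=
        fun n _ => (map_add π _ _).symm
      rw [Finset.sum_congr rfl h3]
      rw [Finset.sum_eq_single_of_mem m hm
        (fun n _ hne => by rw [Hanti m n (Ne.symm hne), map_zero])]
    have hterm : ∀ m, ‖π (star (aa m) * aa m + aa m * star (aa m))‖ ≤ 2*‖a‖^2 := by
      intro m
      have h2 : ‖aa m‖ = ‖a‖ := by
        rw [haan]
        exact StarAlgEquiv.norm_map (act (gp m)) a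
      calc ‖π (star (aa m) * aa m + aa m * star (aa m))‖
          ≤ ‖star (aa m) * aa m + aa m * star (aa m)‖ := NonUnitalStarAlgHom.norm_apply_le π _
        _ ≤ ‖star (aa m) * aa m‖ + ‖aa m * star (aa m)‖ := norm_add_le _ _
        _ ≤ ‖star (aa m)‖*‖aa m‖ + ‖aa m‖*‖star (aa m)‖ :=
            add_le_add (norm_mul_le _ _) (norm_mul_le _ _)
        _ = 2*‖a‖^2 := by rw [norm_star, h2]; ring
    have hDnorm : ‖Dop‖ ≤ 2*‖a‖^2 / N := by
      rw [hDop, norm_smul]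
      have hc : ‖((N:ℂ)⁻¹ * (N:ℂ)⁻¹)‖ = (N:ℝ)⁻¹ * (N:ℝ)⁻¹ := by simp
      rw [hc]
      have hsum : ‖∑ m ∈ Finset.range N, π (star (aa m) * aa m + aa m * star (aa m))‖
          ≤ N * (2*‖a‖^2) := by
        refine (norm_sum_le _ _).trans ?_
        calc ∑ m ∈ Finset.range N, ‖π (star (aa m) * aa m + aa m * star (aa m))‖
            ≤ ∑ _m ∈ Finset.range N, 2*‖a‖^2 := Finset.sum_le_sum fun m _ => hterm m
          _ = N * (2*‖a‖^2) := by rw [Finset.sum_const, Finset.card_range, nsmul_eq_mul]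
      calc (N:ℝ)⁻¹*(N:ℝ)⁻¹ * ‖∑ m ∈ Finset.range N, π (star (aa m) * aa m + aa m * star (aa m))‖
          ≤ (N:ℝ)⁻¹*(N:ℝ)⁻¹ * (N*(2*‖a‖^2)) := by
            exact mul_le_mul_of_nonneg_left hsum (by positivity)
        _ = 2*‖a‖^2/N := by field_simp
    have hkey : ∀ x : H, ‖s x‖^2 ≤ ‖Dop‖ * ‖x‖^2 := by
      intro x
      have e1 : (inner ℂ x ((star s * s) x) : ℂ) = inner ℂ (s x) (s x) := by
        rw [ContinuousLinearMap.mul_apply, ContinuousLinearMap.star_eq_adjoint,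
          ContinuousLinearMap.adjoint_inner_right]
      have e2 : (inner ℂ x ((s * star s) x) : ℂ) = inner ℂ (star s x) (star s x) := by
        rw [ContinuousLinearMap.mul_apply]
        rw [show s ((star s) x) = (ContinuousLinearMap.adjoint (star s)) ((star s) x) from by
          rw [ContinuousLinearMap.star_eq_adjoint, ContinuousLinearMap.adjoint_adjoint]]
        rw [ContinuousLinearMap.adjoint_inner_right]
      have h2 : ‖(inner ℂ x (Dop x) : ℂ)‖ = ‖s x‖^2 + ‖(star s) x‖^2 := by
        rw [hD_def, ContinuousLinearMap.add_apply, inner_add_right, e1, e2,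
          inner_self_eq_norm_sq_to_K, inner_self_eq_norm_sq_to_K]
        rw [← RCLike.ofReal_pow, ← RCLike.ofReal_pow, ← RCLike.ofReal_add, RCLike.norm_ofReal]
        exact abs_of_nonneg (by positivity)
      have h3 : ‖s x‖^2 ≤ ‖(inner ℂ x (Dop x) : ℂ)‖ := by
        rw [h2]
        exact le_add_of_nonneg_right (by positivity)
      have h4 : ‖(inner ℂ x (Dop x) : ℂ)‖ ≤ ‖x‖ * ‖Dop x‖ := norm_inner_le_norm _ _
      have h5 : ‖x‖ * ‖Dop x‖ ≤ ‖Dop‖ * ‖x‖^2 := by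
        have h6 := ContinuousLinearMap.le_opNorm Dop x
        calc ‖x‖ * ‖Dop x‖ ≤ ‖x‖ * (‖Dop‖ * ‖x‖) :=
            mul_le_mul_of_nonneg_left h6 (norm_nonneg x)
          _ = ‖Dop‖ * ‖x‖^2 := by ring
      linarith
    have hsD : ‖s‖^2 ≤ ‖Dop‖ := by
      have hs2 : ‖s‖ ≤ Real.sqrt ‖Dop‖ := by
        apply ContinuousLinearMap.opNorm_le_bound s (Real.sqrt_nonneg _)
        intro x
        have h3 : ‖s x‖^2 ≤ (Real.sqrt ‖Dop‖ * ‖x‖)^2 := by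
          rw [mul_pow, Real.sq_sqrt (norm_nonneg _)]
          exact hkey x
        calc ‖s x‖ = Real.sqrt (‖s x‖^2) := (Real.sqrt_sq (norm_nonneg _)).symm
          _ ≤ Real.sqrt ((Real.sqrt ‖Dop‖ * ‖x‖)^2) := Real.sqrt_le_sqrt h3
          _ = Real.sqrt ‖Dop‖ * ‖x‖ := Real.sqrt_sq (by positivity)
      calc ‖s‖^2 ≤ (Real.sqrt ‖Dop‖)^2 := pow_le_pow_left₀ (norm_nonneg s) hs2 2
        _ = ‖Dop‖ := Real.sq_sqrt (norm_nonneg _)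
    have hTs : ‖E * π a * E‖ ≤ ‖s‖ := by
      rw [← hEsE]
      calc ‖E * s * E‖ ≤ ‖E * s‖ * ‖E‖ := norm_mul_le _ _
        _ ≤ (‖E‖ * ‖s‖) * ‖E‖ := mul_le_mul_of_nonneg_right (norm_mul_le _ _) (norm_nonneg _)
        _ ≤ ‖s‖ := by nlinarith [norm_nonneg s, norm_nonneg E]
    calc ‖E * π a * E‖^2 ≤ ‖s‖^2 := pow_le_pow_left₀ (norm_nonneg _) hTs 2
      _ ≤ ‖Dop‖ := hsD
      _ ≤ 2*‖a‖^2 / N := hDnorm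
  have hT0 : ‖E * π a * E‖ = 0 := by
    by_contra hne
    have hpos : 0 < ‖E * π a * E‖^2 :=
      pow_pos ((norm_nonneg _).lt_of_ne (Ne.symm hne)) 2
    obtain ⟨N, hN⟩ := exists_nat_gt (2*‖a‖^2 / ‖E * π a * E‖^2)
    have h1 := hmain (N+1) (by omega)
    have hlt : 2*‖a‖^2 / ‖E * π a * E‖^2 < ((N+1:ℕ):ℝ) := by
      refine hN.trans_le ?_
      exact_mod_cast Nat.le_succ N
    have hNpos : (0:ℝ) < ((N+1:ℕ):ℝ) := by positivity
    rw [div_lt_iff₀ hpos] at hlt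
    have h2 : 2*‖a‖^2 / ((N+1:ℕ):ℝ) < ‖E * π a * E‖^2 := by
      rw [div_lt_iff₀ hNpos]
      linarith
    linarith
  exact norm_eq_zero.mp hT0
end

section
/- Let A = ⊛_ℕ B be the infinite Fermi C*-tensor product of a unital Z₂-graded C*-algebra B with the finite-permutation group ℙ acting, and let ω be a symmetric state that is strongly clustering. Then the U_ω(ℙ)-invariant vectors in H_ω form a one-dimensional subspace spanned by ξ_ω. -/
open scoped ComplexOrder

/-- If a symmetric state `Ω` on the infinite Fermi C*-tensor product
`A = ⊛_ℕ B` is strongly clustering, then the `U(ℙ)`-invariant vectors in its GNS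
space form the one-dimensional subspace spanned by the cyclic vector `ξ`. -/
theorem deFinetti_stmt18
(B : Type) [CStarAlgebra B] (β : B ≃⋆ₐ[ℂ] B) (hβ : ∀ b, β (β b) = b)
    (A : Type) [CStarAlgebra A]
    (θ : A ≃⋆ₐ[ℂ] A) (hθ : ∀ a, θ (θ a) = a)
    (ι : ℕ → B →⋆ₐ[ℂ] A)
    (hθι : ∀ j b, θ (ι j b) = ι j (β b))
    (hdense :
      Dense ((StarAlgebra.adjoin ℂ (⋃ j, Set.range (ι j)) : StarSubalgebra ℂ A) : Set A))
    (hcomm : ∀ i j, i ≠ j → ∀ b b', (β b = b ∨ β b' = b') →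
      ι i b * ι j b' = ι j b' * ι i b)
    (hanti : ∀ i j, i ≠ j → ∀ b b', β b = -b → β b' = -b' →
      ι i b * ι j b' = -(ι j b' * ι i b))
    (act : finitaryPerms → A ≃⋆ₐ[ℂ] A)
    (hactmul : ∀ g h x, act (g * h) x = act g (act h x))
    (hactι : ∀ g j b, act g (ι j b) = ι ((g : Equiv.Perm ℕ) j) b)
    (Ω : A → ℂ) (hΩ : IsStateOn Ω)
    (hsym : ∀ g x, Ω (act g x) = Ω x)
(H : Type) [NormedAddCommGroup H] [InnerProductSpace ℂ H] [CompleteSpace H]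
    (π : A →⋆ₐ[ℂ] (H →L[ℂ] H)) (ξ : H)
    (hcyc : Dense {x : H | ∃ a, π a ξ = x})
    (hrep : ∀ a, Ω a = (inner ℂ ξ (π a ξ) : ℂ))
    (U : finitaryPerms → (H →L[ℂ] H))
    (hUmul : ∀ g h, U (g * h) = U g * U h)
    (hUunitary : ∀ g, U g ∈ unitary (H →L[ℂ] H))
    (hUξ : ∀ g, U g ξ = ξ)
    (hcov : ∀ g a, U g * π a = π (act g a) * U g)
    (hclust : ∃ g : ℕ → finitaryPerms, ∀ a b : A,
      Filter.Tendsto (fun n => Ω (act (g n) a * b)) Filter.atTop (nhds (Ω a * Ω b))) :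
    ∀ x : H, (∀ g, U g x = x) → ∃ c : ℂ, x = c • ξ := by
  obtain ⟨g, hg⟩ := hclust
  intro x hx
  -- star (U g) fixes x
  have hUstar : ∀ g' : finitaryPerms, star (U g') x = x := by
    intro g'
    have h1 : star (U g') * U g' = 1 := (hUunitary g').1
    calc star (U g') x = star (U g') (U g' x) := by rw [hx g']
    _ = (star (U g') * U g') x := rfl
    _ = x := by rw [h1]; rfl
  -- π(act g a) ξ = U g (π a ξ)
  have hkey : ∀ (g' : finitaryPerms) (a : A), π (act g' a) ξ = U g' (π a ξ) := by
    intro g' a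
    have := congrArg (fun T : H →L[ℂ] H => T ξ) (hcov g' a)
    simp only [ContinuousLinearMap.mul_apply] at this
    rw [hUξ g'] at this
    exact this.symm
  -- Ω (act g (star a) * b) = ⟪U g (π a ξ), π b ξ⟫
  have hform : ∀ (g' : finitaryPerms) (a b : A),
      Ω (act g' (star a) * b) = (inner ℂ (U g' (π a ξ)) (π b ξ) : ℂ) := by
    intro g' a b
    rw [hrep, map_mul]
    have h2 : (inner ℂ ξ (π (act g' (star a)) (π b ξ)) : ℂ)
        = inner ℂ (ContinuousLinearMap.adjoint (π (act g' (star a))) ξ) (π b ξ) :=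
      (ContinuousLinearMap.adjoint_inner_left _ _ _).symm
    have h3 : ContinuousLinearMap.adjoint (π (act g' (star a))) = π (act g' a) := by
      rw [← ContinuousLinearMap.star_eq_adjoint, ← map_star, ← map_star, star_star]
    have h4 : (inner ℂ ξ ((π (act g' (star a)) * π b) ξ) : ℂ)
        = inner ℂ ξ (π (act g' (star a)) (π b ξ)) := rfl
    rw [h4, h2, h3, hkey]
  -- key limit: for all a b, ⟪U (g n) (π a ξ), π b ξ⟫ → ⟪π a ξ, ξ⟫ * Ω b
  have hlim : ∀ a b : A, Filter.Tendsto
      (fun n => (inner ℂ (U (g n) (π a ξ)) (π b ξ) : ℂ)) Filter.atTop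
      (nhds ((inner ℂ (π a ξ) ξ : ℂ) * Ω b)) := by
    intro a b
    have h0 := hg (star a) b
    have he : (fun n => Ω (act (g n) (star a) * b))
        = fun n => (inner ℂ (U (g n) (π a ξ)) (π b ξ) : ℂ) := by
      funext n; exact hform (g n) a b
    have hΩa : Ω (star a) = (inner ℂ (π a ξ) ξ : ℂ) := by
      rw [hrep]
      rw [map_star]
      calc (inner ℂ ξ (star (π a) ξ) : ℂ)
          = inner ℂ ξ (ContinuousLinearMap.adjoint (π a) ξ) := by
            rw [ContinuousLinearMap.star_eq_adjoint]
      _ = inner ℂ (π a ξ) ξ := ContinuousLinearMap.adjoint_inner_right _ _ _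
    rw [he, hΩa] at h0
    exact h0
  -- main estimate: ∀ b a, ‖⟪x, π b ξ⟫ - ⟪π a ξ, ξ⟫ * Ω b‖ ≤ ‖x - π a ξ‖ * ‖π b ξ‖
  have hest : ∀ b a : A, ‖(inner ℂ x (π b ξ) : ℂ) - (inner ℂ (π a ξ) ξ : ℂ) * Ω b‖
      ≤ ‖x - π a ξ‖ * ‖π b ξ‖ := by
    intro b a
    have hb : ∀ n, ‖(inner ℂ x (π b ξ) : ℂ) - (inner ℂ (U (g n) (π a ξ)) (π b ξ) : ℂ)‖
        ≤ ‖x - π a ξ‖ * ‖π b ξ‖ := by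
      intro n
      have hxU : x = U (g n) x := (hx (g n)).symm
      have : (inner ℂ x (π b ξ) : ℂ) - inner ℂ (U (g n) (π a ξ)) (π b ξ)
          = inner ℂ (U (g n) (x - π a ξ)) (π b ξ) := by
        rw [map_sub, inner_sub_left]
        rw [← hxU]
      rw [this]
      calc ‖(inner ℂ (U (g n) (x - π a ξ)) (π b ξ) : ℂ)‖
          ≤ ‖U (g n) (x - π a ξ)‖ * ‖π b ξ‖ := norm_inner_le_norm _ _
      _ = ‖x - π a ξ‖ * ‖π b ξ‖ := by
            rw [ContinuousLinearMap.norm_map_of_mem_unitary (hUunitary (g n))]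
    have ht : Filter.Tendsto
        (fun n => ‖(inner ℂ x (π b ξ) : ℂ) - (inner ℂ (U (g n) (π a ξ)) (π b ξ) : ℂ)‖)
        Filter.atTop (nhds ‖(inner ℂ x (π b ξ) : ℂ) - (inner ℂ (π a ξ) ξ : ℂ) * Ω b‖) :=
      ((tendsto_const_nhds.sub (hlim a b)).norm)
    exact le_of_tendsto ht (Filter.Eventually.of_forall hb)
  -- conclude: ⟪x, π b ξ⟫ = ⟪x, ξ⟫ * Ω b
  have hmain : ∀ b : A, (inner ℂ x (π b ξ) : ℂ) = (inner ℂ x ξ : ℂ) * Ω b := by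
    intro b
    set D := (inner ℂ x (π b ξ) : ℂ) - (inner ℂ x ξ : ℂ) * Ω b with hD
    have hDest : ∀ a : A, ‖D‖ ≤ ‖x - π a ξ‖ * (‖π b ξ‖ + ‖ξ‖ * ‖Ω b‖) := by
      intro a
      have h1 := hest b a
      have h2 : ‖((inner ℂ (π a ξ) ξ : ℂ) - (inner ℂ x ξ : ℂ)) * Ω b‖
          ≤ ‖x - π a ξ‖ * (‖ξ‖ * ‖Ω b‖) := by
        rw [norm_mul]
        have : (inner ℂ (π a ξ) ξ : ℂ) - inner ℂ x ξ = inner ℂ (π a ξ - x) ξ := by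
          rw [inner_sub_left]
        rw [this]
        calc ‖(inner ℂ (π a ξ - x) ξ : ℂ)‖ * ‖Ω b‖
            ≤ (‖π a ξ - x‖ * ‖ξ‖) * ‖Ω b‖ := by
              exact mul_le_mul_of_nonneg_right (norm_inner_le_norm _ _) (norm_nonneg _)
        _ = ‖x - π a ξ‖ * (‖ξ‖ * ‖Ω b‖) := by rw [norm_sub_rev]; ring
      have h3 : D = ((inner ℂ x (π b ξ) : ℂ) - (inner ℂ (π a ξ) ξ : ℂ) * Ω b)
          + ((inner ℂ (π a ξ) ξ : ℂ) - (inner ℂ x ξ : ℂ)) * Ω b := by ring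
      calc ‖D‖ ≤ ‖(inner ℂ x (π b ξ) : ℂ) - (inner ℂ (π a ξ) ξ : ℂ) * Ω b‖
          + ‖((inner ℂ (π a ξ) ξ : ℂ) - (inner ℂ x ξ : ℂ)) * Ω b‖ := by
            rw [h3]; exact norm_add_le _ _
      _ ≤ ‖x - π a ξ‖ * ‖π b ξ‖ + ‖x - π a ξ‖ * (‖ξ‖ * ‖Ω b‖) := add_le_add h1 h2
      _ = ‖x - π a ξ‖ * (‖π b ξ‖ + ‖ξ‖ * ‖Ω b‖) := by ring
    have hD0 : ‖D‖ = 0 := by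
      by_contra hne
      have hpos : 0 < ‖D‖ := lt_of_le_of_ne (norm_nonneg _) (Ne.symm hne)
      set C := ‖π b ξ‖ + ‖ξ‖ * ‖Ω b‖ + 1 with hC
      have hCpos : 0 < C := by positivity
      obtain ⟨z, hz, hdist⟩ := Metric.mem_closure_iff.mp (hcyc x) (‖D‖ / C)
        (div_pos hpos hCpos)
      obtain ⟨a, ha⟩ := hz
      have h4 : ‖D‖ ≤ ‖x - π a ξ‖ * (‖π b ξ‖ + ‖ξ‖ * ‖Ω b‖) := hDest a
      have h5 : ‖x - π a ξ‖ < ‖D‖ / C := by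
        rw [ha, ← dist_eq_norm]; exact hdist
      have h6 : ‖x - π a ξ‖ * (‖π b ξ‖ + ‖ξ‖ * ‖Ω b‖) < (‖D‖ / C) * C := by
        have hK0 : (0:ℝ) ≤ ‖π b ξ‖ + ‖ξ‖ * ‖Ω b‖ := by positivity
        have hKC : ‖π b ξ‖ + ‖ξ‖ * ‖Ω b‖ < C := by rw [hC]; linarith
        have ha0 : (0:ℝ) ≤ ‖x - π a ξ‖ := norm_nonneg _
        have hDC : 0 < ‖D‖ / C := div_pos hpos hCpos
        nlinarith
      rw [div_mul_cancel₀ _ (ne_of_gt hCpos)] at h6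
      exact absurd (lt_of_le_of_lt h4 h6) (lt_irrefl _)
    have h7 := norm_eq_zero.mp hD0
    rw [hD] at h7
    exact sub_eq_zero.mp h7
  -- orthogonality conclusion
  refine ⟨(inner ℂ ξ x : ℂ), ?_⟩
  set y := x - (inner ℂ ξ x : ℂ) • ξ with hy
  have hyz : ∀ z ∈ {z : H | ∃ a, π a ξ = z}, (inner ℂ y z : ℂ) = 0 := by
    rintro z ⟨b, rfl⟩
    rw [hy, inner_sub_left, inner_smul_left, inner_conj_symm, hmain b, hrep b]
    ring
  have hfun : (fun z : H => (inner ℂ y z : ℂ)) = fun _ => (0 : ℂ) :=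
    Continuous.ext_on hcyc (continuous_const.inner continuous_id) continuous_const hyz
  have hy0 : (inner ℂ y y : ℂ) = 0 := by
    have := congrFun hfun y
    -- but y need not be in the dense set; hfun holds everywhere
    exact this
  have : y = 0 := inner_self_eq_zero.mp hy0
  rw [hy] at this
  exact (sub_eq_zero.mp this)
end
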